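/- Let p and q be probability densities on ℝ^d with p(x)·q(x) > 0 for all x. Then the acceptance rate of the independent Metropolis–Hastings algorithm satisfies AR = ∫∫ p(x)q(x') min{1, p(x')q(x)/(p(x)q(x'))} dx dx' ≥ 1 − sqrt( (1/2)·( KL(q‖p) + KL(p‖q) ) ). -/

import Mathlib

open MeasureTheory
open Real

lemma aux_min_formula (a b : ℝ) : min a b = (a + b - |a - b|) / 2 := by
  rcases le_total a b with h | h
  · rw [min_eq_left h, abs_of_nonpos (by linarith)]; ring
  · rw [min_eq_right h, abs_of_nonneg (by linarith)]; ring


lemma aux_log_ge {t : ℝ} (ht : 1 ≤ t) : 2 * (t - 1) ≤ (t + 1) * Real.log t := by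
  set F : ℝ → ℝ := fun t => (t + 1) * Real.log t - 2 * (t - 1) with hF
  have key : MonotoneOn F (Set.Ici (1:ℝ)) := by
    apply monotoneOn_of_deriv_nonneg (convex_Ici 1)
    · apply ContinuousOn.sub
      · exact (continuousOn_id.add continuousOn_const).mul
          (Real.continuousOn_log.mono (by intro x hx; simp at hx ⊢; linarith))
      · fun_prop
    · intro x hx
      simp only [interior_Ici, Set.mem_Ioi] at hx
      have hx0 : x ≠ 0 := by positivity
      have hx0' : (0:ℝ) < x := by linarith
      have hd : HasDerivAt F (1 * Real.log x + (x + 1) * x⁻¹ - 2) x := by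
        have h1 : HasDerivAt (fun t : ℝ => (t + 1) * Real.log t)
            (1 * Real.log x + (x + 1) * x⁻¹) x :=
          (((hasDerivAt_id x).add_const 1).mul (Real.hasDerivAt_log hx0))
        have h2 : HasDerivAt (fun t : ℝ => 2 * (t - 1)) 2 x := by
          simpa using ((hasDerivAt_id x).sub_const 1).const_mul 2
        exact h1.sub h2
      exact hd.differentiableAt.differentiableWithinAt
    · intro x hx
      simp only [interior_Ici, Set.mem_Ioi] at hx
      have hx0 : (0:ℝ) < x := by linarith
      have hd : HasDerivAt F (Real.log x + (x + 1) * x⁻¹ - 2) x := by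
        have h1 : HasDerivAt (fun t : ℝ => (t + 1) * Real.log t)
            (1 * Real.log x + (x + 1) * x⁻¹) x :=
          (((hasDerivAt_id x).add_const 1).mul (Real.hasDerivAt_log (ne_of_gt hx0)))
        have h2 : HasDerivAt (fun t : ℝ => 2 * (t - 1)) 2 x := by
          simpa using ((hasDerivAt_id x).sub_const 1).const_mul 2
        exact (h1.sub h2).congr_deriv (by ring)
      rw [hd.deriv]
      have := Real.one_sub_inv_le_log_of_pos hx0
      have : (x+1) * x⁻¹ = 1 + x⁻¹ := by field_simp
      nlinarith [Real.one_sub_inv_le_log_of_pos hx0]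
  have h1 : F 1 ≤ F t := key (by simp) ht ht
  simp only [hF] at h1
  simp at h1
  linarith

lemma aux_pointwise {a b : ℝ} (ha : 0 < a) (hb : 0 < b) :
    (a - b) ^ 2 ≤ ((a + b) / 2) * ((a - b) * Real.log (a / b)) := by
  -- wlog a ≥ b
  rcases le_total b a with h | h
  · have ht : 1 ≤ a / b := (one_le_div hb).2 h
    have := aux_log_ge ht
    have hlog : Real.log (a / b) = Real.log (a/b) := rfl
    have key : 2 * (a/b - 1) ≤ (a/b + 1) * Real.log (a/b) := this
    have hb2 : (0:ℝ) < b^2 := by positivity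
    have h1 : 2 * (a - b) * b ≤ (a + b) * b * Real.log (a/b) := by
      have := mul_le_mul_of_nonneg_left key (le_of_lt hb2)
      calc 2 * (a - b) * b = b^2 * (2 * (a/b - 1)) := by field_simp
        _ ≤ b^2 * ((a/b + 1) * Real.log (a/b)) := this
        _ = (a + b) * b * Real.log (a/b) := by field_simp
    nlinarith [sub_nonneg.2 h, Real.log_nonneg ht, sq_nonneg (a-b)]
  · have ht : 1 ≤ b / a := (one_le_div ha).2 h
    have key : 2 * (b/a - 1) ≤ (b/a + 1) * Real.log (b/a) := aux_log_ge ht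
    have hlog : Real.log (a / b) = - Real.log (b / a) := by
      rw [← Real.log_inv]; congr 1; field_simp
    rw [hlog]
    have ha2 : (0:ℝ) < a^2 := by positivity
    have h1 : 2 * (b - a) * a ≤ (a + b) * a * Real.log (b/a) := by
      have := mul_le_mul_of_nonneg_left key (le_of_lt ha2)
      calc 2 * (b - a) * a = a^2 * (2 * (b/a - 1)) := by field_simp
        _ ≤ a^2 * ((b/a + 1) * Real.log (b/a)) := this
        _ = (a + b) * a * Real.log (b/a) := by field_simp; ring
    nlinarith [sub_nonneg.2 h, Real.log_nonneg ht, sq_nonneg (a-b)]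

lemma aux_mul_log_nonneg {a b : ℝ} (ha : 0 < a) (hb : 0 < b) :
    0 ≤ (a - b) * Real.log (a / b) := by
  rcases le_total b a with h | h
  · exact mul_nonneg (by linarith) (Real.log_nonneg ((one_le_div hb).2 h))
  · have h1 : a - b ≤ 0 := by linarith
    have h2 : Real.log (a / b) ≤ 0 := by
      apply Real.log_nonpos (by positivity)
      rw [div_le_one hb]; exact h
    nlinarith [mul_nonneg (neg_nonneg.2 h1) (neg_nonneg.2 h2)]

set_option maxHeartbeats 1000000 in
theorem imh_acceptance_rate_ge_one_sub_sqrt_sym_kl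
    {d : ℕ} (p q : (Fin d → ℝ) → ℝ)
    (hp_meas : Measurable p) (hq_meas : Measurable q)
    (hp_nonneg : ∀ x, 0 ≤ p x) (hq_nonneg : ∀ x, 0 ≤ q x)
    (hp_int : ∫ x, p x = 1) (hq_int : ∫ x, q x = 1)
    (h_pos : ∀ x, 0 < p x * q x)
    (h_qp_int : Integrable (fun x => q x * Real.log (q x / p x)))
    (h_pq_int : Integrable (fun x => p x * Real.log (p x / q x))) :
    ∫ x, ∫ x', p x * q x' * min 1 (p x' * q x / (p x * q x')) ≥
      1 - Real.sqrt ((1 / 2) *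
        ((∫ x, q x * Real.log (q x / p x)) + ∫ x, p x * Real.log (p x / q x))) := by
  classical
  have hp_pos : ∀ x, 0 < p x := fun x => by
    rcases (hp_nonneg x).lt_or_eq with h | h
    · exact h
    · exfalso; have := h_pos x; rw [← h] at this; simp at this
  have hq_pos : ∀ x, 0 < q x := fun x => by
    rcases (hq_nonneg x).lt_or_eq with h | h
    · exact h
    · exfalso; have := h_pos x; rw [← h] at this; simp at this
  have hp_int' : Integrable p := by
    by_contra h; rw [integral_undef h] at hp_int; norm_num at hp_int
  have hq_int' : Integrable q := by
    by_contra h; rw [integral_undef h] at hq_int; norm_num at hq_int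
  set Lg : (Fin d → ℝ) → ℝ := fun x => Real.log (p x / q x) with hLg
  have hpLg_int : Integrable (fun x => p x * Lg x) := h_pq_int
  have hLg_neg : ∀ x, Lg x = - Real.log (q x / p x) := by
    intro x
    rw [hLg]
    simp only
    rw [← Real.log_inv]
    congr 1
    field_simp
  have hqLg_int : Integrable (fun x => q x * Lg x) := by
    have he : (fun x => q x * Lg x) = fun x => -(q x * Real.log (q x / p x)) := by
      funext x; rw [hLg_neg x]; ring
    rw [he]; exact h_qp_int.neg
  set Kpq := ∫ x, p x * Real.log (p x / q x) with hKpq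
  set Kqp := ∫ x, q x * Real.log (q x / p x) with hKqp
  have hqLg_val : ∫ x, q x * Lg x = -Kqp := by
    have he : (fun x => q x * Lg x) = fun x => -(q x * Real.log (q x / p x)) := by
      funext x; rw [hLg_neg x]; ring
    rw [he, integral_neg, hKqp]
  have hpLg_val : ∫ x, p x * Lg x = Kpq := rfl
  -- rewrite integrand as a min
  have hmin : ∀ x x', p x * q x' * min 1 (p x' * q x / (p x * q x'))
      = min (p x * q x') (p x' * q x) := by
    intro x x'
    have hc : 0 < p x * q x' := mul_pos (hp_pos x) (hq_pos x')
    rw [mul_min_of_nonneg _ _ hc.le, mul_one]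
    congr 1
    field_simp
    rw [div_eq_iff hc.ne']; ring
  set m : (Fin d → ℝ) → ℝ := fun x => ∫ x', |p x * q x' - p x' * q x| with hm
  have h1 : ∀ x : Fin d → ℝ, Integrable (fun x' => p x * q x') :=
    fun x => hq_int'.const_mul _
  have h2 : ∀ x : Fin d → ℝ, Integrable (fun x' => p x' * q x) :=
    fun x => hp_int'.mul_const _
  have h3 : ∀ x : Fin d → ℝ, Integrable (fun x' => |p x * q x' - p x' * q x|) :=
    fun x => ((h1 x).sub (h2 x)).abs
  have h12 : ∀ x : Fin d → ℝ, Integrable (fun x' => p x * q x' + p x' * q x) :=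
    fun x => by exact (h1 x).add (h2 x)
  have hinner : ∀ x, (∫ x', min (p x * q x') (p x' * q x)) = (p x + q x - m x) / 2 := by
    intro x
    have he : (fun x' => min (p x * q x') (p x' * q x))
        = fun x' => ((p x * q x' + p x' * q x) - |p x * q x' - p x' * q x|) / 2 := by
      funext x'; rw [aux_min_formula]
    rw [he]
    rw [integral_div, integral_sub (h12 x) (h3 x), integral_add (h1 x) (h2 x),
        integral_const_mul, integral_mul_const, hq_int, hp_int, mul_one, one_mul]
  have hLHS : (∫ x, ∫ x', p x * q x' * min 1 (p x' * q x / (p x * q x')))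
      = ∫ x, (p x + q x - m x) / 2 := by
    apply integral_congr_ae (Filter.Eventually.of_forall fun x => ?_)
    rw [← hinner x]
    exact integral_congr_ae (Filter.Eventually.of_forall fun x' => hmin x x')
  -- measurability and integrability of m
  have hm_meas : AEStronglyMeasurable m volume := by
    have hsm : StronglyMeasurable
        (fun z : (Fin d → ℝ) × (Fin d → ℝ) => |p z.1 * q z.2 - p z.2 * q z.1|) :=
      (((hp_meas.comp measurable_fst).mul (hq_meas.comp measurable_snd)).sub
        ((hp_meas.comp measurable_snd).mul (hq_meas.comp measurable_fst))).abs.stronglyMeasurable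
    exact hsm.integral_prod_right'.aestronglyMeasurable
  have hm_nonneg : ∀ x, 0 ≤ m x := fun x => integral_nonneg fun x' => abs_nonneg _
  have hm_le : ∀ x, m x ≤ p x + q x := by
    intro x
    calc m x ≤ ∫ x', (p x * q x' + p x' * q x) := by
          apply integral_mono (h3 x) (h12 x)
          intro x'
          have ha : 0 ≤ p x * q x' := mul_nonneg (hp_nonneg x) (hq_nonneg x')
          have hb : 0 ≤ p x' * q x := mul_nonneg (hp_nonneg x') (hq_nonneg x)
          show |p x * q x' - p x' * q x| ≤ p x * q x' + p x' * q x
          exact abs_le.mpr ⟨by linarith, by linarith⟩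
      _ = p x + q x := by
          rw [integral_add (h1 x) (h2 x), integral_const_mul, integral_mul_const,
            hq_int, hp_int, mul_one, one_mul]
  have hm_int : Integrable m := by
    refine Integrable.mono (show Integrable (fun x => p x + q x) from hp_int'.add hq_int')
      hm_meas (Filter.Eventually.of_forall fun x => ?_)
    rw [Real.norm_eq_abs, Real.norm_eq_abs, abs_of_nonneg (hm_nonneg x)]
    exact (hm_le x).trans (le_abs_self _)
  rw [ge_iff_le, hLHS]
  have hM : ∫ x, (p x + q x - m x) / 2 = (1 + 1 - ∫ x, m x) / 2 := by
    have t1 : (∫ x, (p x + q x - m x)) = (∫ x, (p x + q x)) - ∫ x, m x :=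
      integral_sub (show Integrable (fun x => p x + q x) from hp_int'.add hq_int') hm_int
    have t2 : (∫ x, (p x + q x)) = (∫ x, p x) + ∫ x, q x := integral_add hp_int' hq_int'
    rw [integral_div, t1, t2, hp_int, hq_int]
  rw [hM]
  -- product space
  have hF_int : Integrable (fun z : (Fin d → ℝ) × (Fin d → ℝ) => p z.1 * q z.2) ((volume : Measure (Fin d → ℝ)).prod volume) :=
    hp_int'.mul_prod hq_int'
  have hG_int : Integrable (fun z : (Fin d → ℝ) × (Fin d → ℝ) => p z.2 * q z.1) ((volume : Measure (Fin d → ℝ)).prod volume) :=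
    (hq_int'.mul_prod hp_int').congr
      (Filter.Eventually.of_forall fun z => mul_comm (q z.1) (p z.2))
  have hA_int : Integrable
      (fun z : (Fin d → ℝ) × (Fin d → ℝ) => |p z.1 * q z.2 - p z.2 * q z.1|) ((volume : Measure (Fin d → ℝ)).prod volume) :=
    (hF_int.sub hG_int).abs
  have hMprod : (∫ x, m x)
      = ∫ z : (Fin d → ℝ) × (Fin d → ℝ), |p z.1 * q z.2 - p z.2 * q z.1| ∂((volume : Measure (Fin d → ℝ)).prod volume) := by
    rw [hm]
    exact (integral_prod _ hA_int).symm
  have hlog_id : ∀ z : (Fin d → ℝ) × (Fin d → ℝ),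
      Real.log ((p z.1 * q z.2) / (p z.2 * q z.1)) = Lg z.1 - Lg z.2 := by
    intro z
    have hpq1 : p z.1 ≠ 0 := (hp_pos z.1).ne'
    have hpq2 : p z.2 ≠ 0 := (hp_pos z.2).ne'
    have hq1 : q z.1 ≠ 0 := (hq_pos z.1).ne'
    have hq2 : q z.2 ≠ 0 := (hq_pos z.2).ne'
    rw [show (p z.1 * q z.2) / (p z.2 * q z.1) = (p z.1 / q z.1) / (p z.2 / q z.2) by
      field_simp]
    rw [Real.log_div (by positivity) (by positivity)]
  -- integrability of the four expanded terms
  have e1 : Integrable (fun z : (Fin d → ℝ) × (Fin d → ℝ) => (p z.1 * Lg z.1) * q z.2) ((volume : Measure (Fin d → ℝ)).prod volume) :=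
    hpLg_int.mul_prod hq_int'
  have e2 : Integrable (fun z : (Fin d → ℝ) × (Fin d → ℝ) => p z.1 * (q z.2 * Lg z.2)) ((volume : Measure (Fin d → ℝ)).prod volume) :=
    hp_int'.mul_prod hqLg_int
  have e3 : Integrable (fun z : (Fin d → ℝ) × (Fin d → ℝ) => (q z.1 * Lg z.1) * p z.2) ((volume : Measure (Fin d → ℝ)).prod volume) :=
    hqLg_int.mul_prod hp_int'
  have e4 : Integrable (fun z : (Fin d → ℝ) × (Fin d → ℝ) => q z.1 * (p z.2 * Lg z.2)) ((volume : Measure (Fin d → ℝ)).prod volume) :=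
    hq_int'.mul_prod hpLg_int
  have e12 : Integrable (fun z : (Fin d → ℝ) × (Fin d → ℝ) =>
      (p z.1 * Lg z.1) * q z.2 - p z.1 * (q z.2 * Lg z.2)) ((volume : Measure (Fin d → ℝ)).prod volume) := by exact e1.sub e2
  have e123 : Integrable (fun z : (Fin d → ℝ) × (Fin d → ℝ) =>
      (p z.1 * Lg z.1) * q z.2 - p z.1 * (q z.2 * Lg z.2) - (q z.1 * Lg z.1) * p z.2) ((volume : Measure (Fin d → ℝ)).prod volume) := by
    exact e12.sub e3
  have hLz_int : Integrable (fun z : (Fin d → ℝ) × (Fin d → ℝ) =>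
      (p z.1 * q z.2 - p z.2 * q z.1) * (Lg z.1 - Lg z.2)) ((volume : Measure (Fin d → ℝ)).prod volume) := by
    have he : (fun z : (Fin d → ℝ) × (Fin d → ℝ) =>
        (p z.1 * q z.2 - p z.2 * q z.1) * (Lg z.1 - Lg z.2))
        = fun z => (p z.1 * Lg z.1) * q z.2 - p z.1 * (q z.2 * Lg z.2)
          - (q z.1 * Lg z.1) * p z.2 + q z.1 * (p z.2 * Lg z.2) := by
      funext z; ring
    rw [he]; exact e123.add e4
  set S := ∫ z : (Fin d → ℝ) × (Fin d → ℝ),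
      (p z.1 * q z.2 - p z.2 * q z.1) * (Lg z.1 - Lg z.2) ∂((volume : Measure (Fin d → ℝ)).prod volume) with hSdef
  have v1 : (∫ z : (Fin d → ℝ) × (Fin d → ℝ), (p z.1 * Lg z.1) * q z.2 ∂((volume : Measure (Fin d → ℝ)).prod volume))
      = (∫ x, p x * Lg x) * (∫ x, q x) := integral_prod_mul (fun x => p x * Lg x) q
  have v2 : (∫ z : (Fin d → ℝ) × (Fin d → ℝ), p z.1 * (q z.2 * Lg z.2) ∂((volume : Measure (Fin d → ℝ)).prod volume))
      = (∫ x, p x) * (∫ x, q x * Lg x) := integral_prod_mul p (fun x => q x * Lg x)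
  have v3 : (∫ z : (Fin d → ℝ) × (Fin d → ℝ), (q z.1 * Lg z.1) * p z.2 ∂((volume : Measure (Fin d → ℝ)).prod volume))
      = (∫ x, q x * Lg x) * (∫ x, p x) := integral_prod_mul (fun x => q x * Lg x) p
  have v4 : (∫ z : (Fin d → ℝ) × (Fin d → ℝ), q z.1 * (p z.2 * Lg z.2) ∂((volume : Measure (Fin d → ℝ)).prod volume))
      = (∫ x, q x) * (∫ x, p x * Lg x) := integral_prod_mul q (fun x => p x * Lg x)
  have hS_val : S = 2 * (Kpq + Kqp) := by
    rw [hSdef]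
    have he : (fun z : (Fin d → ℝ) × (Fin d → ℝ) =>
        (p z.1 * q z.2 - p z.2 * q z.1) * (Lg z.1 - Lg z.2))
        = fun z => (p z.1 * Lg z.1) * q z.2 - p z.1 * (q z.2 * Lg z.2)
          - (q z.1 * Lg z.1) * p z.2 + q z.1 * (p z.2 * Lg z.2) := by
      funext z; ring
    have t1 : (∫ z : (Fin d → ℝ) × (Fin d → ℝ), ((p z.1 * Lg z.1) * q z.2 - p z.1 * (q z.2 * Lg z.2)
          - (q z.1 * Lg z.1) * p z.2 + q z.1 * (p z.2 * Lg z.2)) ∂((volume : Measure (Fin d → ℝ)).prod volume))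
        = (∫ z : (Fin d → ℝ) × (Fin d → ℝ), ((p z.1 * Lg z.1) * q z.2 - p z.1 * (q z.2 * Lg z.2)
          - (q z.1 * Lg z.1) * p z.2) ∂((volume : Measure (Fin d → ℝ)).prod volume))
          + ∫ z : (Fin d → ℝ) × (Fin d → ℝ), q z.1 * (p z.2 * Lg z.2) ∂((volume : Measure (Fin d → ℝ)).prod volume) := integral_add e123 e4
    have t2 : (∫ z : (Fin d → ℝ) × (Fin d → ℝ), ((p z.1 * Lg z.1) * q z.2 - p z.1 * (q z.2 * Lg z.2)
          - (q z.1 * Lg z.1) * p z.2) ∂((volume : Measure (Fin d → ℝ)).prod volume))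
        = (∫ z : (Fin d → ℝ) × (Fin d → ℝ), ((p z.1 * Lg z.1) * q z.2 - p z.1 * (q z.2 * Lg z.2)) ∂((volume : Measure (Fin d → ℝ)).prod volume))
          - ∫ z : (Fin d → ℝ) × (Fin d → ℝ), (q z.1 * Lg z.1) * p z.2 ∂((volume : Measure (Fin d → ℝ)).prod volume) := integral_sub e12 e3
    have t3 : (∫ z : (Fin d → ℝ) × (Fin d → ℝ), ((p z.1 * Lg z.1) * q z.2 - p z.1 * (q z.2 * Lg z.2)) ∂((volume : Measure (Fin d → ℝ)).prod volume))
        = (∫ z : (Fin d → ℝ) × (Fin d → ℝ), (p z.1 * Lg z.1) * q z.2 ∂((volume : Measure (Fin d → ℝ)).prod volume))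
          - ∫ z : (Fin d → ℝ) × (Fin d → ℝ), p z.1 * (q z.2 * Lg z.2) ∂((volume : Measure (Fin d → ℝ)).prod volume) := integral_sub e1 e2
    rw [he, t1, t2, t3, v1, v2, v3, v4, hpLg_val, hqLg_val, hp_int, hq_int]
    ring
  have hLz_nonneg : ∀ z : (Fin d → ℝ) × (Fin d → ℝ),
      0 ≤ (p z.1 * q z.2 - p z.2 * q z.1) * (Lg z.1 - Lg z.2) := by
    intro z
    have ha : 0 < p z.1 * q z.2 := mul_pos (hp_pos z.1) (hq_pos z.2)
    have hb : 0 < p z.2 * q z.1 := mul_pos (hp_pos z.2) (hq_pos z.1)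
    have := aux_mul_log_nonneg ha hb
    rwa [hlog_id z] at this
  have hS_nonneg : 0 ≤ S := integral_nonneg hLz_nonneg
  have hHz_int : Integrable (fun z : (Fin d → ℝ) × (Fin d → ℝ) =>
      (p z.1 * q z.2 + p z.2 * q z.1) / 2) ((volume : Measure (Fin d → ℝ)).prod volume) := by
    exact (hF_int.add hG_int).div_const 2
  have vG : (∫ z : (Fin d → ℝ) × (Fin d → ℝ), p z.2 * q z.1 ∂((volume : Measure (Fin d → ℝ)).prod volume))
      = (∫ x, q x) * (∫ x, p x) := by
    rw [show (fun z : (Fin d → ℝ) × (Fin d → ℝ) => p z.2 * q z.1)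
      = fun z => q z.1 * p z.2 from funext fun z => mul_comm _ _]
    exact integral_prod_mul q p
  have hHz_val : (∫ z : (Fin d → ℝ) × (Fin d → ℝ),
      (p z.1 * q z.2 + p z.2 * q z.1) / 2 ∂((volume : Measure (Fin d → ℝ)).prod volume)) = 1 := by
    have u1 : (∫ z : (Fin d → ℝ) × (Fin d → ℝ), (p z.1 * q z.2 + p z.2 * q z.1) ∂((volume : Measure (Fin d → ℝ)).prod volume))
        = (∫ z : (Fin d → ℝ) × (Fin d → ℝ), p z.1 * q z.2 ∂((volume : Measure (Fin d → ℝ)).prod volume)) + ∫ z : (Fin d → ℝ) × (Fin d → ℝ), p z.2 * q z.1 ∂((volume : Measure (Fin d → ℝ)).prod volume) :=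
      integral_add hF_int hG_int
    have u2 : (∫ z : (Fin d → ℝ) × (Fin d → ℝ), p z.1 * q z.2 ∂((volume : Measure (Fin d → ℝ)).prod volume)) = (∫ x, p x) * ∫ x, q x :=
      integral_prod_mul _ _
    rw [integral_div, u1, u2, vG, hp_int, hq_int]
    norm_num
  have hHz_nonneg : ∀ z : (Fin d → ℝ) × (Fin d → ℝ),
      0 ≤ (p z.1 * q z.2 + p z.2 * q z.1) / 2 := by
    intro z
    have ha : 0 ≤ p z.1 * q z.2 := mul_nonneg (hp_nonneg _) (hq_nonneg _)
    have hb : 0 ≤ p z.2 * q z.1 := mul_nonneg (hp_nonneg _) (hq_nonneg _)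
    linarith
  -- key bound for each t > 0
  have hbound : ∀ t : ℝ, 0 < t →
      (∫ z : (Fin d → ℝ) × (Fin d → ℝ), |p z.1 * q z.2 - p z.2 * q z.1| ∂((volume : Measure (Fin d → ℝ)).prod volume))
        ≤ (t + S / t) / 2 := by
    intro t ht
    have hpt : ∀ z : (Fin d → ℝ) × (Fin d → ℝ), |p z.1 * q z.2 - p z.2 * q z.1|
        ≤ (t * ((p z.1 * q z.2 + p z.2 * q z.1) / 2)
          + ((p z.1 * q z.2 - p z.2 * q z.1) * (Lg z.1 - Lg z.2)) / t) / 2 := by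
      intro z
      have ha : 0 < p z.1 * q z.2 := mul_pos (hp_pos z.1) (hq_pos z.2)
      have hb : 0 < p z.2 * q z.1 := mul_pos (hp_pos z.2) (hq_pos z.1)
      have hkey := aux_pointwise ha hb
      rw [hlog_id z] at hkey
      set u := t * ((p z.1 * q z.2 + p z.2 * q z.1) / 2) with hu
      set v := ((p z.1 * q z.2 - p z.2 * q z.1) * (Lg z.1 - Lg z.2)) / t with hv
      have hu0 : 0 ≤ u := mul_nonneg ht.le (hHz_nonneg z)
      have hv0 : 0 ≤ v := div_nonneg (hLz_nonneg z) ht.le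
      have hB : 0 ≤ (u + v) / 2 := by linarith
      have huv : u * v = ((p z.1 * q z.2 + p z.2 * q z.1) / 2)
          * ((p z.1 * q z.2 - p z.2 * q z.1) * (Lg z.1 - Lg z.2)) := by
        rw [hu, hv]; field_simp
      have h5 : (p z.1 * q z.2 - p z.2 * q z.1) ^ 2 ≤ u * v := by rw [huv]; exact hkey
      have hsq : |p z.1 * q z.2 - p z.2 * q z.1| ^ 2 ≤ ((u + v) / 2) ^ 2 := by
        rw [sq_abs]
        nlinarith [sq_nonneg (u - v), h5]
      calc |p z.1 * q z.2 - p z.2 * q z.1|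
          = Real.sqrt (|p z.1 * q z.2 - p z.2 * q z.1| ^ 2) :=
            (Real.sqrt_sq (abs_nonneg _)).symm
        _ ≤ Real.sqrt (((u + v) / 2) ^ 2) := Real.sqrt_le_sqrt hsq
        _ = (u + v) / 2 := Real.sqrt_sq hB
    have hRHS_int : Integrable (fun z : (Fin d → ℝ) × (Fin d → ℝ) =>
        (t * ((p z.1 * q z.2 + p z.2 * q z.1) / 2)
          + ((p z.1 * q z.2 - p z.2 * q z.1) * (Lg z.1 - Lg z.2)) / t) / 2) ((volume : Measure (Fin d → ℝ)).prod volume) := by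
      exact ((hHz_int.const_mul t).add (hLz_int.div_const t)).div_const 2
    calc (∫ z : (Fin d → ℝ) × (Fin d → ℝ), |p z.1 * q z.2 - p z.2 * q z.1| ∂((volume : Measure (Fin d → ℝ)).prod volume))
        ≤ ∫ z : (Fin d → ℝ) × (Fin d → ℝ),
            (t * ((p z.1 * q z.2 + p z.2 * q z.1) / 2)
              + ((p z.1 * q z.2 - p z.2 * q z.1) * (Lg z.1 - Lg z.2)) / t) / 2 ∂((volume : Measure (Fin d → ℝ)).prod volume) :=
          integral_mono hA_int hRHS_int hpt
      _ = (t + S / t) / 2 := by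
          have b1 : (∫ z : (Fin d → ℝ) × (Fin d → ℝ), (t * ((p z.1 * q z.2 + p z.2 * q z.1) / 2)
              + ((p z.1 * q z.2 - p z.2 * q z.1) * (Lg z.1 - Lg z.2)) / t) / 2 ∂((volume : Measure (Fin d → ℝ)).prod volume))
            = (∫ z : (Fin d → ℝ) × (Fin d → ℝ), (t * ((p z.1 * q z.2 + p z.2 * q z.1) / 2)
              + ((p z.1 * q z.2 - p z.2 * q z.1) * (Lg z.1 - Lg z.2)) / t) ∂((volume : Measure (Fin d → ℝ)).prod volume)) / 2 :=
            integral_div _ _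
          have b2 : (∫ z : (Fin d → ℝ) × (Fin d → ℝ), (t * ((p z.1 * q z.2 + p z.2 * q z.1) / 2)
              + ((p z.1 * q z.2 - p z.2 * q z.1) * (Lg z.1 - Lg z.2)) / t) ∂((volume : Measure (Fin d → ℝ)).prod volume))
            = (∫ z : (Fin d → ℝ) × (Fin d → ℝ), t * ((p z.1 * q z.2 + p z.2 * q z.1) / 2) ∂((volume : Measure (Fin d → ℝ)).prod volume))
              + ∫ z : (Fin d → ℝ) × (Fin d → ℝ), ((p z.1 * q z.2 - p z.2 * q z.1) * (Lg z.1 - Lg z.2)) / t ∂((volume : Measure (Fin d → ℝ)).prod volume) :=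
            integral_add (hHz_int.const_mul t) (hLz_int.div_const t)
          have b3 : (∫ z : (Fin d → ℝ) × (Fin d → ℝ), t * ((p z.1 * q z.2 + p z.2 * q z.1) / 2) ∂((volume : Measure (Fin d → ℝ)).prod volume))
            = t * ∫ z : (Fin d → ℝ) × (Fin d → ℝ), (p z.1 * q z.2 + p z.2 * q z.1) / 2 ∂((volume : Measure (Fin d → ℝ)).prod volume) := integral_const_mul _ _
          have b4 : (∫ z : (Fin d → ℝ) × (Fin d → ℝ), ((p z.1 * q z.2 - p z.2 * q z.1) * (Lg z.1 - Lg z.2)) / t ∂((volume : Measure (Fin d → ℝ)).prod volume))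
            = (∫ z : (Fin d → ℝ) × (Fin d → ℝ), (p z.1 * q z.2 - p z.2 * q z.1) * (Lg z.1 - Lg z.2) ∂((volume : Measure (Fin d → ℝ)).prod volume)) / t :=
            integral_div _ _
          rw [b1, b2, b3, b4, hHz_val, mul_one, ← hSdef]
  have hD_le : (∫ z : (Fin d → ℝ) × (Fin d → ℝ), |p z.1 * q z.2 - p z.2 * q z.1| ∂((volume : Measure (Fin d → ℝ)).prod volume))
      ≤ Real.sqrt S := by
    rcases hS_nonneg.lt_or_eq with hS | hS
    · have := hbound (Real.sqrt S) (Real.sqrt_pos.2 hS)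
      rwa [Real.div_sqrt, ← two_mul, mul_div_cancel_left₀ _ (two_ne_zero)] at this
    · have hD0 : (∫ z : (Fin d → ℝ) × (Fin d → ℝ),
          |p z.1 * q z.2 - p z.2 * q z.1| ∂((volume : Measure (Fin d → ℝ)).prod volume)) ≤ 0 := by
        by_contra h
        push_neg at h
        have := hbound _ h
        rw [← hS] at this
        simp at this
        linarith
      rw [← hS, Real.sqrt_zero]
      exact hD0
  have hsqrt : Real.sqrt ((1 / 2) * (Kqp + Kpq)) = Real.sqrt S / 2 := by
    rw [show (1 / 2 : ℝ) * (Kqp + Kpq) = S * (1/2)^2 by rw [hS_val]; ring,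
      Real.sqrt_mul hS_nonneg, Real.sqrt_sq (by norm_num : (0:ℝ) ≤ 1/2)]
    ring
  rw [hsqrt, hMprod]
  linarith [hD_le]
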